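/- Adjoint sensitivity formula (vector space version of Corollary 3.5): Let V be a finite-dimensional real inner-product space, f : V → V be C¹ with complete flow, g : [0,T] → V solve g' = f(g) with g(0) = g₀, and C : V → ℝ be differentiable. Let p : [0,T] → V solve the adjoint equation p'(t) = -Df(g(t))ᵀ p(t) with terminal condition p(T) = ∇C(g(T)). Then p(0) = ∇_{g₀} (C ∘ Φ_T)(g₀), i.e., for every δ ∈ V, ⟨p(0), δ⟩ = D(C ∘ Φ_T)(g₀)·δ, where Φ_T is the time-T flow of f. -/

import Mathlib

open RealInnerProductSpace

open Set Metric Real Filter Topology in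
private theorem adjoint_sensitivity_aux
    {V : Type*} [NormedAddCommGroup V] [InnerProductSpace ℝ V] [FiniteDimensional ℝ V]
    (f : V → V) (hf : ContDiff ℝ 1 f)
    (T : ℝ) (hT : 0 ≤ T) (Φ : ℝ → V → V)
    (hΦ0 : ∀ x, Φ 0 x = x)
    (hΦ : ∀ x t, HasDerivAt (fun s => Φ s x) (f (Φ t x)) t)
    (g₀ : V) (g : ℝ → V) (hg : ∀ t, HasDerivAt g (f (g t)) t) (hg0 : g 0 = g₀)
    (C : V → ℝ) (hC : Differentiable ℝ C)
    (p pdot : ℝ → V)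
    (hp : ∀ t, HasDerivAt p (pdot t) t)
    (hpdot : ∀ t (v : V), ⟪pdot t, v⟫ = -⟪p t, fderiv ℝ f (g t) v⟫)
    (hpT : p T = gradient C (g T)) :
    ∀ δ : V, ⟪p 0, δ⟫ = fderiv ℝ (fun x => C (Φ T x)) g₀ δ := by
  -- basic continuity and differentiability facts
  have hgc : Continuous g := continuous_iff_continuousAt.2 fun t => (hg t).continuousAt
  have hpc : Continuous p := continuous_iff_continuousAt.2 fun t => (hp t).continuousAt
  have hyc : ∀ x : V, Continuous fun t => Φ t x := fun x =>
    continuous_iff_continuousAt.2 fun t => (hΦ x t).continuousAt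
  have hfd : ∀ x : V, DifferentiableAt ℝ f x := fun x => (hf.differentiable one_ne_zero) x
  have hDfc : Continuous (fderiv ℝ f) := hf.continuous_fderiv one_ne_zero
  -- bounds on the trajectories
  obtain ⟨R₁, hR₁⟩ := isCompact_Icc.exists_bound_of_continuousOn
    (hgc.continuousOn : ContinuousOn g (Icc 0 T))
  obtain ⟨R₂, hR₂⟩ := isCompact_Icc.exists_bound_of_continuousOn
    ((hyc g₀).continuousOn : ContinuousOn (fun t => Φ t g₀) (Icc 0 T))
  set R : ℝ := max R₁ R₂ with hRdef
  have hgR : ∀ t ∈ Icc (0:ℝ) T, ‖g t‖ ≤ R := fun t ht => (hR₁ t ht).trans (le_max_left _ _)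
  have hΦR : ∀ t ∈ Icc (0:ℝ) T, ‖Φ t g₀‖ ≤ R := fun t ht => (hR₂ t ht).trans (le_max_right _ _)
  have hR0 : 0 ≤ R := le_trans (norm_nonneg _) (hgR 0 ⟨le_rfl, hT⟩)
  set B : Set V := closedBall (0:V) (R + 2) with hBdef
  have hBcompact : IsCompact B := isCompact_closedBall _ _
  have hBconvex : Convex ℝ B := convex_closedBall _ _
  have hgB : ∀ t ∈ Icc (0:ℝ) T, g t ∈ B := fun t ht => by
    rw [hBdef, mem_closedBall_zero_iff]; linarith [hgR t ht]
  -- Lipschitz bound for f on B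
  obtain ⟨L₀, hL₀⟩ := hBcompact.exists_bound_of_continuousOn hDfc.continuousOn
  set L : ℝ := max L₀ 0 with hLdef
  have hL0 : 0 ≤ L := le_max_right _ _
  have hL : ∀ x ∈ B, ‖fderiv ℝ f x‖ ≤ L := fun x hx => (hL₀ x hx).trans (le_max_left _ _)
  set K : NNReal := ⟨L, hL0⟩ with hKdef
  have hKL : (K : ℝ) = L := rfl
  have hlip : LipschitzOnWith K f B := by
    apply Convex.lipschitzOnWith_of_nnnorm_fderiv_le (fun x _ => hfd x) _ hBconvex
    intro x hx
    rw [← NNReal.coe_le_coe, coe_nnnorm, hKL]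
    exact hL x hx
  -- uniqueness : Φ t g₀ = g t on [0, T]
  have huniq : EqOn (fun t => Φ t g₀) g (Icc 0 T) := by
    apply ODE_solution_unique_of_mem_Icc_right (v := fun _ x => f x) (s := fun _ => B)
      (fun _ _ => hlip) ((hyc g₀).continuousOn)
      (fun t _ => (hΦ g₀ t).hasDerivWithinAt) ?_ hgc.continuousOn
      (fun t _ => (hg t).hasDerivWithinAt)
      (fun t ht => hgB t (Ico_subset_Icc_self ht))
      (by rw [hΦ0, hg0])
    intro t ht
    show Φ t g₀ ∈ B
    rw [hBdef, mem_closedBall_zero_iff]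
    linarith [hΦR t (Ico_subset_Icc_self ht)]
  have hgT : Φ T g₀ = g T := huniq ⟨hT, le_rfl⟩
  -- the tube lemma with Gronwall estimate
  set d₀ : ℝ := exp (-(L * T)) / 2 with hd₀def
  have hd₀pos : 0 < d₀ := by positivity
  have hd₀E : d₀ * exp (L * T) = 1 / 2 := by
    rw [hd₀def, exp_neg]
    field_simp
  have hd₀le : d₀ ≤ 1 / 2 := by
    nlinarith [exp_pos (L * T), one_le_exp (by positivity : (0:ℝ) ≤ L * T)]
  have key : ∀ δ : V, ‖δ‖ ≤ d₀ → ∀ t ∈ Icc (0:ℝ) T,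
      dist (Φ t (g₀ + δ)) (g t) ≤ ‖δ‖ * exp (L * t) := by
    intro δ hδ
    set y : ℝ → V := fun t => Φ t (g₀ + δ) with hydef
    have hy0 : dist (y 0) (g 0) ≤ ‖δ‖ := by
      simp only [hydef, hΦ0, hg0, dist_eq_norm, add_sub_cancel_left, le_refl]
    have gron : ∀ b ∈ Icc (0:ℝ) T, (∀ s ∈ Icc (0:ℝ) b, dist (y s) (g s) ≤ 1) →
        ∀ t ∈ Icc (0:ℝ) b, dist (y t) (g t) ≤ ‖δ‖ * exp (L * t) := by
      intro b hb htube t ht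
      have hyB : ∀ s ∈ Ico (0:ℝ) b, y s ∈ B := by
        intro s hs
        have hsI : s ∈ Icc (0:ℝ) T := ⟨hs.1, le_trans hs.2.le hb.2⟩
        have h1 := htube s ⟨hs.1, hs.2.le⟩
        have h2 := hgR s hsI
        rw [hBdef, mem_closedBall_zero_iff]
        rw [dist_eq_norm] at h1
        calc ‖y s‖ = ‖(y s - g s) + g s‖ := by rw [sub_add_cancel]
          _ ≤ ‖y s - g s‖ + ‖g s‖ := norm_add_le _ _
          _ ≤ R + 2 := by linarith
      have := dist_le_of_trajectories_ODE_of_mem (v := fun _ x => f x) (s := fun _ => B)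
        (fun _ _ => hlip) ((hyc _).continuousOn)
        (fun s _ => (hΦ (g₀ + δ) s).hasDerivWithinAt) hyB
        hgc.continuousOn (fun s _ => (hg s).hasDerivWithinAt)
        (fun s hs => hgB s ⟨hs.1, le_trans hs.2.le hb.2⟩) hy0 t ht
      simpa [hKL] using this
    set A : Set ℝ := {b | b ∈ Icc (0:ℝ) T ∧ ∀ s ∈ Icc (0:ℝ) b, dist (y s) (g s) ≤ 1} with hAdef
    have h0A : (0:ℝ) ∈ A := by
      refine ⟨⟨le_rfl, hT⟩, ?_⟩
      intro s hs
      have hs0 : s = 0 := le_antisymm hs.2 hs.1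
      rw [hs0]
      linarith
    have hbdd : BddAbove A := ⟨T, fun b hb => hb.1.2⟩
    set τ := sSup A with hτdef
    have hτ0 : 0 ≤ τ := le_csSup hbdd h0A
    have hτT : τ ≤ T := csSup_le ⟨0, h0A⟩ fun b hb => hb.1.2
    have hlt : ∀ s, 0 ≤ s → s < τ → dist (y s) (g s) ≤ 1 := by
      intro s hs0 hsτ
      obtain ⟨b, hbA, hsb⟩ := exists_lt_of_lt_csSup ⟨0, h0A⟩ hsτ
      exact hbA.2 s ⟨hs0, hsb.le⟩
    have hτA : τ ∈ A := by
      refine ⟨⟨hτ0, hτT⟩, ?_⟩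
      intro s hs
      rcases lt_or_eq_of_le hs.2 with h | h
      · exact hlt s hs.1 h
      · subst h
        rcases eq_or_lt_of_le hτ0 with h0 | h0
        · rw [← h0]
          linarith
        · have hcont : ContinuousAt (fun s => dist (y s) (g s)) τ :=
            (((hyc _).dist hgc)).continuousAt
          refine le_of_tendsto (hcont.tendsto.mono_left (nhdsWithin_le_nhds : 𝓝[Iio τ] τ ≤ 𝓝 τ)) ?_
          filter_upwards [Ioo_mem_nhdsLT_of_mem (⟨h0, le_rfl⟩ : τ ∈ Ioc 0 τ)] with u hu
          exact hlt u hu.1.le hu.2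
    have hτtube : ∀ s ∈ Icc (0:ℝ) τ, dist (y s) (g s) ≤ ‖δ‖ * exp (L * s) :=
      gron τ ⟨hτ0, hτT⟩ hτA.2
    have hhalf : ∀ s ∈ Icc (0:ℝ) τ, dist (y s) (g s) ≤ 1 / 2 := by
      intro s hs
      have h1 := hτtube s hs
      have h2 : exp (L * s) ≤ exp (L * T) := exp_le_exp.2
        (mul_le_mul_of_nonneg_left (le_trans hs.2 hτT) hL0)
      have h3 : ‖δ‖ * exp (L * s) ≤ d₀ * exp (L * T) :=
        mul_le_mul hδ h2 (exp_pos _).le hd₀pos.le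
      rw [hd₀E] at h3
      linarith
    have hτeq : τ = T := by
      by_contra hne
      have hτltT : τ < T := lt_of_le_of_ne hτT hne
      have hdτ : dist (y τ) (g τ) ≤ 1/2 := hhalf τ ⟨hτ0, le_rfl⟩
      have hcont : ContinuousAt (fun s => dist (y s) (g s)) τ :=
        (((hyc _).dist hgc)).continuousAt
      have hev : ∀ᶠ s in 𝓝 τ, dist (y s) (g s) < 1 :=
        hcont.tendsto.eventually_lt_const (by linarith)
      obtain ⟨ε, hεpos, hball⟩ := Metric.eventually_nhds_iff.1 hev
      set τ' := min T (τ + ε/2) with hτ'def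
      have hττ' : τ < τ' := lt_min hτltT (by linarith)
      have hτ'A : τ' ∈ A := by
        refine ⟨⟨by linarith, min_le_left _ _⟩, ?_⟩
        intro s hs
        rcases le_or_gt s τ with h | h
        · exact hτA.2 s ⟨hs.1, h⟩
        · refine (hball ?_).le
          rw [Real.dist_eq, abs_of_pos (by linarith : (0:ℝ) < s - τ)]
          have hs2 : s ≤ τ + ε/2 := le_trans hs.2 (min_le_right _ _)
          linarith
      exact absurd (le_csSup hbdd hτ'A) (not_le.2 hττ')
    rw [hτeq] at hτtube
    exact hτtube
  -- bound on p
  obtain ⟨P₀, hP₀⟩ := isCompact_Icc.exists_bound_of_continuousOn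
    (hpc.continuousOn : ContinuousOn p (Icc 0 T))
  set P : ℝ := max P₀ 0 with hPdef
  have hP0 : 0 ≤ P := le_max_right _ _
  have hP : ∀ t ∈ Icc (0:ℝ) T, ‖p t‖ ≤ P := fun t ht => (hP₀ t ht).trans (le_max_left _ _)
  -- uniform continuity of Df on B
  have huc := hBcompact.uniformContinuousOn_of_continuous hDfc.continuousOn
  rw [Metric.uniformContinuousOn_iff] at huc
  -- derivative of C at g T
  have hCg : HasFDerivAt C ((InnerProductSpace.toDual ℝ V) (gradient C (g T))) (g T) :=
    (hC (g T)).hasGradientAt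
  have hCo := hCg.isLittleO
  rw [Asymptotics.isLittleO_iff] at hCo
  set E : ℝ := exp (L * T) with hEdef
  have hE1 : 1 ≤ E := one_le_exp (by positivity)
  have hEpos : 0 < E := lt_of_lt_of_le one_pos hE1
  suffices Hfd : HasFDerivAt (fun x => C (Φ T x)) (innerSL ℝ (p 0)) g₀ by
    intro δ
    rw [Hfd.fderiv]
    rfl
  rw [hasFDerivAt_iff_isLittleO_nhds_zero, Asymptotics.isLittleO_iff]
  intro c hc
  set εq : ℝ := c / (2 * (T + 1) * (P + 1) * E) with hεqdef
  have hεqpos : 0 < εq := by positivity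
  set ε₁ : ℝ := c / (2 * E) with hε₁def
  have hε₁pos : 0 < ε₁ := by positivity
  obtain ⟨ρ₂, hρ₂pos, hρ₂⟩ := huc εq hεqpos
  obtain ⟨ρ₁, hρ₁pos, hρ₁⟩ := Metric.eventually_nhds_iff.1 (hCo hε₁pos)
  set d : ℝ := min d₀ (min (ρ₁ / (2 * E)) (ρ₂ / (2 * E))) with hddef
  have hdpos : 0 < d := lt_min hd₀pos (lt_min (by positivity) (by positivity))
  filter_upwards [Metric.ball_mem_nhds (0:V) hdpos] with δ hδball
  have hδd : ‖δ‖ < d := by rwa [mem_ball, dist_zero_right] at hδball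
  have hδ0 : ‖δ‖ ≤ d₀ := le_trans hδd.le (min_le_left _ _)
  have hδρ₁ : ‖δ‖ * E < ρ₁ := by
    have h1 : ‖δ‖ < ρ₁ / (2 * E) :=
      lt_of_lt_of_le hδd (le_trans (min_le_right _ _) (min_le_left _ _))
    have h2 : ‖δ‖ * E < (ρ₁ / (2 * E)) * E := mul_lt_mul_of_pos_right h1 hEpos
    have h3 : (ρ₁ / (2 * E)) * E = ρ₁ / 2 := by field_simp
    linarith [h3 ▸ h2]
  have hδρ₂ : ‖δ‖ * E < ρ₂ := by
    have h1 : ‖δ‖ < ρ₂ / (2 * E) :=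
      lt_of_lt_of_le hδd (le_trans (min_le_right _ _) (min_le_right _ _))
    have h2 : ‖δ‖ * E < (ρ₂ / (2 * E)) * E := mul_lt_mul_of_pos_right h1 hEpos
    have h3 : (ρ₂ / (2 * E)) * E = ρ₂ / 2 := by field_simp
    linarith [h3 ▸ h2]
  set y : ℝ → V := fun t => Φ t (g₀ + δ) with hydef
  have htube := key δ hδ0
  have htubeE : ∀ t ∈ Icc (0:ℝ) T, dist (y t) (g t) ≤ ‖δ‖ * E := by
    intro t ht
    refine (htube t ht).trans ?_
    exact mul_le_mul_of_nonneg_left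
      (exp_le_exp.2 (mul_le_mul_of_nonneg_left ht.2 hL0)) (norm_nonneg _)
  have hhalf2 : ∀ t ∈ Icc (0:ℝ) T, dist (y t) (g t) ≤ 1/2 := by
    intro t ht
    have h1 := htubeE t ht
    have h2 : ‖δ‖ * E ≤ d₀ * E := mul_le_mul_of_nonneg_right hδ0 hEpos.le
    rw [hEdef] at h2
    rw [hd₀E] at h2
    rw [hEdef] at h1
    linarith
  -- the quadratic remainder and its bound
  set q : ℝ → V := fun t => f (y t) - f (g t) - fderiv ℝ f (g t) (y t - g t) with hqdef
  have hqbound : ∀ t ∈ Icc (0:ℝ) T, ‖q t‖ ≤ εq * (‖δ‖ * E) := by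
    intro t ht
    set r : ℝ := dist (y t) (g t) with hrdef
    have hr0 : 0 ≤ r := dist_nonneg
    have hrE : r ≤ ‖δ‖ * E := htubeE t ht
    have hsub : closedBall (g t) r ⊆ B := by
      intro z hz
      rw [mem_closedBall] at hz
      rw [hBdef, mem_closedBall_zero_iff]
      have h1 : ‖z - g t‖ ≤ r := by rwa [← dist_eq_norm]
      have h2 := hgR t ht
      have h3 : r ≤ 1/2 := hhalf2 t ht
      calc ‖z‖ = ‖(z - g t) + g t‖ := by rw [sub_add_cancel]
        _ ≤ ‖z - g t‖ + ‖g t‖ := norm_add_le _ _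
        _ ≤ R + 2 := by linarith
    have hbound : ∀ z ∈ closedBall (g t) r, ‖fderiv ℝ f z - fderiv ℝ f (g t)‖ ≤ εq := by
      intro z hz
      have hzB := hsub hz
      have hgtB := hgB t ht
      have hdistz : dist z (g t) < ρ₂ :=
        lt_of_le_of_lt (mem_closedBall.1 hz) (lt_of_le_of_lt hrE hδρ₂)
      have h4 := hρ₂ z hzB (g t) hgtB hdistz
      rw [dist_eq_norm] at h4
      exact h4.le
    have hmv := (convex_closedBall (g t) r).norm_image_sub_le_of_norm_fderiv_le'
      (fun z _ => hfd z) hbound (mem_closedBall_self hr0)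
      (mem_closedBall.2 le_rfl)
    refine le_trans hmv ?_
    rw [show ‖y t - g t‖ = r by rw [hrdef, dist_eq_norm]]
    exact mul_le_mul_of_nonneg_left hrE hεqpos.le
  -- conservation law: derivative of t ↦ ⟪p t, y t - g t⟫
  have hh : ∀ t : ℝ, HasDerivAt (fun t => ⟪p t, y t - g t⟫) ⟪p t, q t⟫ t := by
    intro t
    have h1 : HasDerivAt (fun t => y t - g t) (f (y t) - f (g t)) t := (hΦ _ t).sub (hg t)
    have h2 := (hp t).inner ℝ h1
    refine h2.congr_deriv ?_
    rw [hpdot]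
    simp only [hqdef, inner_sub_right]
    ring
  have hqc : Continuous q := by
    rw [hqdef]
    exact ((hf.continuous.comp (hyc _)).sub (hf.continuous.comp hgc)).sub
      ((hDfc.comp hgc).clm_apply ((hyc _).sub hgc))
  have hcont_int : Continuous fun t => ⟪p t, q t⟫ := hpc.inner hqc
  have hFTC : ∫ t in (0:ℝ)..T, ⟪p t, q t⟫ = ⟪p T, y T - g T⟫ - ⟪p 0, y 0 - g 0⟫ :=
    intervalIntegral.integral_eq_sub_of_hasDerivAt (fun t _ => hh t)
      (hcont_int.intervalIntegrable 0 T)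
  have h00 : ⟪p 0, y 0 - g 0⟫ = ⟪p 0, δ⟫ := by
    simp only [hydef, hΦ0, hg0, add_sub_cancel_left]
  have hIbound : |⟪p T, y T - g T⟫ - ⟪p 0, δ⟫| ≤ (P + 1) * (εq * (‖δ‖ * E)) * T := by
    rw [← h00, ← hFTC]
    have hnb := intervalIntegral.norm_integral_le_of_norm_le_const
      (C := (P + 1) * (εq * (‖δ‖ * E))) (f := fun t => ⟪p t, q t⟫) (a := 0) (b := T) ?_
    · rw [Real.norm_eq_abs, sub_zero, abs_of_nonneg hT] at hnb
      exact hnb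
    · intro t ht
      rw [uIoc_of_le hT] at ht
      have htI : t ∈ Icc (0:ℝ) T := ⟨ht.1.le, ht.2⟩
      refine le_trans (norm_inner_le_norm _ _) ?_
      exact mul_le_mul (by linarith [hP t htI]) (hqbound t htI) (norm_nonneg _) (by linarith)
  have hBterm : |⟪p T, y T - g T⟫ - ⟪p 0, δ⟫| ≤ c / 2 * ‖δ‖ := by
    refine le_trans hIbound ?_
    have hEq : (P + 1) * (εq * (‖δ‖ * E)) * T = c * ‖δ‖ * T / (2 * (T + 1)) := by
      rw [hεqdef]
      field_simp
    rw [hEq, div_le_iff₀ (by positivity : (0:ℝ) < 2 * (T + 1))]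
    have hrw : c / 2 * ‖δ‖ * (2 * (T + 1)) = c * ‖δ‖ * T + c * ‖δ‖ := by ring
    rw [hrw]
    have hnn : 0 ≤ c * ‖δ‖ := mul_nonneg hc.le (norm_nonneg δ)
    linarith
  -- terminal cost term
  have hPT : ∀ w : V, ((InnerProductSpace.toDual ℝ V) (gradient C (g T))) w = ⟪p T, w⟫ := by
    intro w
    rw [hpT]
    exact InnerProductSpace.toDual_apply_apply
  have hyTd : dist (y T) (g T) < ρ₁ := lt_of_le_of_lt (htubeE T ⟨hT, le_rfl⟩) hδρ₁
  have hAterm : |C (y T) - C (g T) - ⟪p T, y T - g T⟫| ≤ c / 2 * ‖δ‖ := by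
    have h1 := hρ₁ hyTd
    rw [hPT] at h1
    rw [Real.norm_eq_abs] at h1
    refine le_trans h1 ?_
    have h2 : ‖y T - g T‖ ≤ ‖δ‖ * E := by
      rw [← dist_eq_norm]
      exact htubeE T ⟨hT, le_rfl⟩
    have h3 : ε₁ * ‖y T - g T‖ ≤ ε₁ * (‖δ‖ * E) := mul_le_mul_of_nonneg_left h2 hε₁pos.le
    have h4 : ε₁ * (‖δ‖ * E) = c / 2 * ‖δ‖ := by
      rw [hε₁def]
      field_simp
    linarith
  -- assemble
  have hyT' : Φ T (g₀ + δ) = y T := rfl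
  have hsplit : C (Φ T (g₀ + δ)) - C (Φ T g₀) - (innerSL ℝ (p 0)) δ
      = (C (y T) - C (g T) - ⟪p T, y T - g T⟫) + (⟪p T, y T - g T⟫ - ⟪p 0, δ⟫) := by
    rw [hyT', hgT]
    have hinn : (innerSL ℝ (p 0)) δ = ⟪p 0, δ⟫ := rfl
    rw [hinn]
    ring
  calc ‖C (Φ T (g₀ + δ)) - C (Φ T g₀) - (innerSL ℝ (p 0)) δ‖
      = |(C (y T) - C (g T) - ⟪p T, y T - g T⟫) + (⟪p T, y T - g T⟫ - ⟪p 0, δ⟫)| := by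
        rw [Real.norm_eq_abs, hsplit]
    _ ≤ |C (y T) - C (g T) - ⟪p T, y T - g T⟫| + |⟪p T, y T - g T⟫ - ⟪p 0, δ⟫| := abs_add_le _ _
    _ ≤ c / 2 * ‖δ‖ + c / 2 * ‖δ‖ := add_le_add hAterm hBterm
    _ = c * ‖δ‖ := by ring


theorem adjoint_sensitivity
    {V : Type*} [NormedAddCommGroup V] [InnerProductSpace ℝ V] [FiniteDimensional ℝ V]
    (f : V → V) (hf : ContDiff ℝ 1 f)
    (T : ℝ) (Φ : ℝ → V → V)
    (hΦ0 : ∀ x, Φ 0 x = x)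
    (hΦ : ∀ x t, HasDerivAt (fun s => Φ s x) (f (Φ t x)) t)
    (g₀ : V) (g : ℝ → V) (hg : ∀ t, HasDerivAt g (f (g t)) t) (hg0 : g 0 = g₀)
    (C : V → ℝ) (hC : Differentiable ℝ C)
    (p pdot : ℝ → V)
    (hp : ∀ t, HasDerivAt p (pdot t) t)
    (hpdot : ∀ t (v : V), ⟪pdot t, v⟫ = -⟪p t, fderiv ℝ f (g t) v⟫)
    (hpT : p T = gradient C (g T)) :
    ∀ δ : V, ⟪p 0, δ⟫ = fderiv ℝ (fun x => C (Φ T x)) g₀ δ := by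
  rcases le_total 0 T with hT | hT
  · exact adjoint_sensitivity_aux f hf T hT Φ hΦ0 hΦ g₀ g hg hg0 C hC p pdot hp hpdot hpT
  · have h := adjoint_sensitivity_aux (fun x => -f x) hf.neg (-T) (by linarith)
      (fun s x => Φ (-s) x) (fun x => by simpa using hΦ0 x)
      (fun x t => by
        simpa [Function.comp_def] using (HasDerivAt.scomp t (hΦ x (-t)) (hasDerivAt_neg t)))
      g₀ (fun t => g (-t))
      (fun t => by simpa [Function.comp_def] using (HasDerivAt.scomp t (hg (-t)) (hasDerivAt_neg t)))
      (by simpa using hg0) C hC (fun t => p (-t)) (fun t => -pdot (-t))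
      (fun t => by simpa [Function.comp_def] using (HasDerivAt.scomp t (hp (-t)) (hasDerivAt_neg t)))
      (fun t v => by
        rw [fderiv_fun_neg]
        simp [hpdot (-t) v])
      (by simpa using hpT)
    intro δ
    simpa using h δ
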